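/- Let k be a field of characteristic zero, Ω the polynomial de Rham complex of the line over k, and Y any cochain complex of k-vector spaces. Form the tensor product complex Y ⊗ Ω, with degree-n component (Y^n ⊗ Ω⁰) ⊕ (Y^{n−1} ⊗ Ω¹) and differential d(y⊗p) = dy⊗p + (−1)^n y⊗p'·dz for y ∈ Y^n, d(y⊗q·dz) = dy⊗q·dz for y ∈ Y^{n−1}. Then the unit chain map u : Y → Y ⊗ Ω, y ↦ y⊗1, is a quasi-isomorphism, and for every a ∈ k the evaluation chain map id_Y ⊗ ev_a : Y ⊗ Ω → Y (sending y⊗p to p(a)·y and y⊗q·dz to 0) is a quasi-isomorphism satisfying (id_Y ⊗ ev_a) ∘ u = id_Y. -/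

import Mathlib

open Polynomial TensorProduct

/- Cochain complexes of `k`-vector spaces are presented as families `Y : ℤ → Type` of
`k`-modules together with differentials `dY : ∀ n, Y n →ₗ[k] Y (n+1)` squaring to zero.
The polynomial de Rham complex `Ω` of the line has `Ω⁰ = k[z]` and `Ω¹ = k[z]·dz ≅ k[z]`,
so `(Y ⊗ Ω)ⁿ = (Yⁿ ⊗ k[z]) ⊕ (Yⁿ⁻¹ ⊗ k[z])`. -/

variable {k : Type} [Field k]

/-- Transport along an equality of degrees. -/
def lcast {F : ℤ → Type} [∀ n, AddCommGroup (F n)] [∀ n, Module k (F n)]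
    {m n : ℤ} (h : m = n) : F m →ₗ[k] F n := by
  subst h; exact LinearMap.id

/-- The differential arriving in degree `n` (from degree `n−1`). -/
def dPrev {F : ℤ → Type} [∀ n, AddCommGroup (F n)] [∀ n, Module k (F n)]
    (dF : ∀ n, F n →ₗ[k] F (n+1)) (n : ℤ) : F (n-1) →ₗ[k] F n :=
  (lcast (show n - 1 + 1 = n by ring)).comp (dF (n-1))

/-- A degreewise linear map `φ` between complexes induces an isomorphism on cohomology in
every degree: elementwise, in each degree `n` the induced map on `H^n` (cocycles modulo
coboundaries) is injective and surjective. -/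
def InducesCohomologyIso {C D : ℤ → Type}
    [∀ n, AddCommGroup (C n)] [∀ n, Module k (C n)]
    [∀ n, AddCommGroup (D n)] [∀ n, Module k (D n)]
    (dC : ∀ n, C n →ₗ[k] C (n+1)) (dD : ∀ n, D n →ₗ[k] D (n+1))
    (φ : ∀ n, C n →ₗ[k] D n) : Prop :=
  ∀ n : ℤ,
    (∀ x : C n, dC n x = 0 → (∃ z : D (n-1), φ n x = dPrev dD n z) →
        ∃ w : C (n-1), x = dPrev dC n w) ∧
    (∀ y : D n, dD n y = 0 →
        ∃ x : C n, dC n x = 0 ∧ ∃ z : D (n-1), y - φ n x = dPrev dD n z)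

section

variable {Y : ℤ → Type} [∀ n, AddCommGroup (Y n)] [∀ n, Module k (Y n)]

/-- Degree-`n` component of `Y ⊗ Ω`: `(Yⁿ ⊗ Ω⁰) ⊕ (Yⁿ⁻¹ ⊗ Ω¹)`. -/
abbrev TOmega (k : Type) [Field k] (Y : ℤ → Type)
    [∀ n, AddCommGroup (Y n)] [∀ n, Module k (Y n)] (n : ℤ) : Type :=
  (TensorProduct k (Y n) k[X]) × (TensorProduct k (Y (n-1)) k[X])

/-- The differential of `Y ⊗ Ω`:
`d(y⊗p) = dy⊗p + (−1)ⁿ y⊗p'·dz` for `y ∈ Yⁿ` and `d(y⊗q·dz) = dy⊗q·dz` for `y ∈ Yⁿ⁻¹`. -/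
noncomputable def dTOmega (dY : ∀ n, Y n →ₗ[k] Y (n+1)) (n : ℤ) :
    TOmega k Y n →ₗ[k] TOmega k Y (n+1) :=
  ((TensorProduct.map (dY n) LinearMap.id).comp
      (LinearMap.fst k (TensorProduct k (Y n) k[X]) (TensorProduct k (Y (n-1)) k[X]))).prod
    (((lcast (F := fun m => TensorProduct k (Y m) k[X]) (show n = n + 1 - 1 by ring)).comp
        (((-1 : k) ^ n) • (TensorProduct.map LinearMap.id Polynomial.derivative))).comp
        (LinearMap.fst k (TensorProduct k (Y n) k[X]) (TensorProduct k (Y (n-1)) k[X]))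
      + ((lcast (F := fun m => TensorProduct k (Y m) k[X]) (show n - 1 + 1 = n + 1 - 1 by ring)).comp
          (TensorProduct.map (dY (n-1)) LinearMap.id)).comp
          (LinearMap.snd k (TensorProduct k (Y n) k[X]) (TensorProduct k (Y (n-1)) k[X])))

/-- The unit chain map `u : Y → Y ⊗ Ω`, `y ↦ y ⊗ 1`. -/
noncomputable def uMap (n : ℤ) : Y n →ₗ[k] TOmega k Y n :=
  ((TensorProduct.mk k (Y n) k[X]).flip 1).prod 0

/-- The evaluation chain map `id_Y ⊗ ev_a : Y ⊗ Ω → Y`, sending `y⊗p` to `p(a)·y` and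
`y⊗q·dz` to `0`. -/
noncomputable def evMap (a : k) (n : ℤ) : TOmega k Y n →ₗ[k] Y n :=
  (TensorProduct.lift (((LinearMap.lsmul k (Y n)).comp (Polynomial.leval a)).flip)).comp
    (LinearMap.fst k (TensorProduct k (Y n) k[X]) (TensorProduct k (Y (n-1)) k[X]))

/-! ### Auxiliary lemmas -/

section Aux

set_option linter.unusedSectionVars false

theorem lcast_refl' {F : ℤ → Type} [∀ n, AddCommGroup (F n)] [∀ n, Module k (F n)]
    {n : ℤ} (h : n = n) (x : F n) : lcast (k := k) (F := F) h x = x := rfl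

theorem lcast_lcast {F : ℤ → Type} [∀ n, AddCommGroup (F n)] [∀ n, Module k (F n)]
    {m n p : ℤ} (h1 : m = n) (h2 : n = p) (x : F m) :
    lcast (k := k) (F := F) h2 (lcast (k := k) (F := F) h1 x)
      = lcast (k := k) (F := F) (h1.trans h2) x := by subst h1; subst h2; rfl

theorem lcast_natural {F G : ℤ → Type}
    [∀ n, AddCommGroup (F n)] [∀ n, Module k (F n)]
    [∀ n, AddCommGroup (G n)] [∀ n, Module k (G n)]
    (f : ∀ m, F m →ₗ[k] G m) {m n : ℤ} (h : m = n) (x : F m) :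
    lcast (k := k) (F := G) h (f m x) = f n (lcast (k := k) (F := F) h x) := by
  subst h; rfl

variable [CharZero k]

/-- Naive antiderivative. -/
noncomputable def Jfun (p : k[X]) : k[X] := p.sum fun i c => C (c / (i+1)) * X^(i+1)

theorem Jfun_add (p q : k[X]) : Jfun (p + q) = Jfun p + Jfun q := by
  unfold Jfun
  rw [sum_add_index] <;> intros <;> simp [add_div, add_mul]

theorem Jfun_smul (s : k) (p : k[X]) : Jfun (s • p) = s • Jfun p := by
  unfold Jfun
  rw [sum_smul_index p s _ (fun i => by simp)]
  unfold Polynomial.sum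
  rw [Finset.smul_sum]
  refine Finset.sum_congr rfl fun i _ => ?_
  simp only []
  rw [mul_div_assoc, C_mul, mul_assoc, smul_eq_C_mul]

theorem deriv_Jfun (p : k[X]) : derivative (Jfun p) = p := by
  conv_rhs => rw [← Polynomial.sum_C_mul_X_pow_eq p]
  unfold Jfun Polynomial.sum
  rw [map_sum]
  refine Finset.sum_congr rfl fun i _ => ?_
  have hi : ((i:k)+1) ≠ 0 := Nat.cast_add_one_ne_zero i
  rw [derivative_C_mul, derivative_X_pow]
  push_cast
  rw [← mul_assoc, ← C_mul, div_mul_cancel₀ _ hi]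

/-- Antiderivative vanishing at `a`, as a linear map. -/
noncomputable def Ia (a : k) : k[X] →ₗ[k] k[X] where
  toFun p := Jfun p - C ((Jfun p).eval a)
  map_add' p q := by show Jfun (p+q) - _ = _; rw [Jfun_add]; simp; ring
  map_smul' s p := by
    show Jfun (s • p) - _ = _
    rw [Jfun_smul]
    simp [smul_sub, smul_eq_C_mul, C_mul]

theorem deriv_Ia (a : k) (p : k[X]) : derivative (Ia a p) = p := by
  simp [Ia, deriv_Jfun]

theorem eval_Ia (a : k) (p : k[X]) : (Ia a p).eval a = 0 := by simp [Ia]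

theorem Ia_deriv (a : k) (p : k[X]) : Ia a (derivative p) = p - C (p.eval a) := by
  have h : derivative (Ia a (derivative p) - (p - C (p.eval a))) = 0 := by
    simp [deriv_Ia]
  have h2 := eq_C_of_derivative_eq_zero h
  have h3 : (Ia a (derivative p) - (p - C (p.eval a))).eval a = 0 := by
    simp [eval_Ia]
  set q := Ia a (derivative p) - (p - C (p.eval a)) with hq
  have hq0 : q = 0 := by
    rw [h2]; rw [h2] at h3; simpa using h3
  rw [hq] at hq0
  exact sub_eq_zero.mp hq0

theorem neg_one_zpow_mul_self (m : ℤ) : ((-1:k)^m) * ((-1:k)^m) = 1 := by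
  rw [← mul_zpow]; norm_num

theorem neg_one_zpow_sub_one (m : ℤ) : ((-1:k)^(m-1)) = -((-1:k)^m) := by
  rw [zpow_sub₀ (by norm_num : (-1:k) ≠ 0)]; rw [zpow_one, div_neg, div_one]

/-! Tensor-level lemmas.  Write `TP m` for `Y m ⊗ k[X]`. -/

/-- ∂ ∘ ∫ = id on `TP m`. -/
theorem TM_eq (a : k) (m : ℤ) (x : TensorProduct k (Y m) k[X]) :
    TensorProduct.map LinearMap.id Polynomial.derivative
      (TensorProduct.map LinearMap.id (Ia a) x) = x := by
  have h : (TensorProduct.map (LinearMap.id : Y m →ₗ[k] Y m) Polynomial.derivative).comp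
      (TensorProduct.map LinearMap.id (Ia a)) = LinearMap.id := by
    apply TensorProduct.ext'
    intro y p
    simp [deriv_Ia]
  exact LinearMap.congr_fun h x

/-- ∫ ∘ ∂ = id − unit∘counit on `TP m`. -/
theorem MT_eq (a : k) (m : ℤ) (x : TensorProduct k (Y m) k[X]) :
    TensorProduct.map LinearMap.id (Ia a)
      (TensorProduct.map LinearMap.id Polynomial.derivative x)
    = x - ((TensorProduct.mk k (Y m) k[X]).flip 1)
        (TensorProduct.lift (((LinearMap.lsmul k (Y m)).comp (Polynomial.leval a)).flip) x) := by
  have h : (TensorProduct.map (LinearMap.id : Y m →ₗ[k] Y m) (Ia a)).comp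
      (TensorProduct.map LinearMap.id Polynomial.derivative)
    = LinearMap.id - ((TensorProduct.mk k (Y m) k[X]).flip 1).comp
        (TensorProduct.lift (((LinearMap.lsmul k (Y m)).comp (Polynomial.leval a)).flip)) := by
    apply TensorProduct.ext'
    intro y p
    simp only [LinearMap.comp_apply, TensorProduct.map_tmul, LinearMap.id_apply,
      LinearMap.sub_apply, TensorProduct.lift.tmul, LinearMap.flip_apply,
      LinearMap.lsmul_apply, Polynomial.leval_apply, TensorProduct.mk_apply, Ia_deriv]
    rw [tmul_sub, sub_right_inj]
    rw [smul_tmul, smul_eq_C_mul, mul_one]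
  exact LinearMap.congr_fun h x

/-- `(dY ⊗ id)` commutes with `(id ⊗ ∫)`. -/
theorem DM_comm (a : k) (dY : ∀ n, Y n →ₗ[k] Y (n+1)) (m : ℤ)
    (x : TensorProduct k (Y m) k[X]) :
    TensorProduct.map (dY m) LinearMap.id (TensorProduct.map LinearMap.id (Ia a) x)
      = TensorProduct.map LinearMap.id (Ia a) (TensorProduct.map (dY m) LinearMap.id x) := by
  have h : (TensorProduct.map (dY m) (LinearMap.id : k[X] →ₗ[k] k[X])).comp
        (TensorProduct.map LinearMap.id (Ia a))
      = (TensorProduct.map LinearMap.id (Ia a)).comp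
        (TensorProduct.map (dY m) LinearMap.id) := by
    apply TensorProduct.ext'
    intro y p
    simp
  exact LinearMap.congr_fun h x

end Aux

/-! ### The homotopy -/

/-- The chain homotopy `h : (Y⊗Ω)ⁿ → (Y⊗Ω)ⁿ⁻¹`, `(x, w) ↦ ((−1)ⁿ⁻¹·(id⊗∫ₐ) w, 0)`. -/
noncomputable def hMap [CharZero k] (a : k) (n : ℤ) :
    TOmega k Y n →ₗ[k] TOmega k Y (n-1) :=
  ((((-1 : k) ^ (n-1)) • (TensorProduct.map LinearMap.id (Ia a))).comp
      (LinearMap.snd k (TensorProduct k (Y n) k[X]) (TensorProduct k (Y (n-1)) k[X]))).prod 0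

section Aux2
set_option linter.unusedSectionVars false
variable [CharZero k]

theorem lcast_fst {m n : ℤ} (h : m = n) (v : TOmega k Y m) :
    (lcast (k := k) (F := TOmega k Y) h v).1
      = lcast (k := k) (F := fun j => TensorProduct k (Y j) k[X]) h v.1 := by
  subst h; rfl

theorem lcast_snd {m n : ℤ} (h : m = n) (v : TOmega k Y m) :
    (lcast (k := k) (F := TOmega k Y) h v).2
      = lcast (k := k) (F := fun j => TensorProduct k (Y j) k[X]) (by rw [h]) v.2 := by
  subst h; rfl

theorem u_chain (dY : ∀ n, Y n →ₗ[k] Y (n+1)) (n : ℤ) (y : Y n) :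
    dTOmega dY n (uMap n y) = uMap (n+1) (dY n y) := by
  refine Prod.ext ?_ ?_ <;>
    simp [dTOmega, uMap, derivative_one]

theorem ev_chain (a : k) (dY : ∀ n, Y n →ₗ[k] Y (n+1)) (n : ℤ) (w : TOmega k Y n) :
    dY n (evMap a n w) = evMap a (n+1) (dTOmega dY n w) := by
  have h : (TensorProduct.lift (((LinearMap.lsmul k (Y (n+1))).comp
        (Polynomial.leval a)).flip)).comp (TensorProduct.map (dY n) LinearMap.id)
      = (dY n).comp (TensorProduct.lift (((LinearMap.lsmul k (Y n)).comp
        (Polynomial.leval a)).flip)) := by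
    apply TensorProduct.ext'; intro y p; simp
  simp only [evMap, dTOmega, LinearMap.comp_apply, LinearMap.fst_apply,
    LinearMap.prod_apply, Pi.prod]
  exact (LinearMap.congr_fun h w.1).symm

theorem ev_u (a : k) (n : ℤ) (y : Y n) : evMap a n (uMap n y) = y := by
  simp [evMap, uMap]

theorem homotopy (a : k) (dY : ∀ n, Y n →ₗ[k] Y (n+1)) (n : ℤ) (v : TOmega k Y n) :
    dPrev (dTOmega dY) n (hMap a n v)
      + lcast (k := k) (F := TOmega k Y) (show n+1-1 = n by ring)
          (hMap a (n+1) (dTOmega dY n v))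
      = v - uMap n (evMap a n v) := by
  obtain ⟨x, w⟩ := v
  refine Prod.ext ?_ ?_
  · simp only [dPrev, hMap, dTOmega, uMap, evMap, LinearMap.comp_apply, LinearMap.prod_apply,
      Function.prod, LinearMap.fst_apply, LinearMap.snd_apply, LinearMap.add_apply,
      LinearMap.smul_apply, LinearMap.zero_apply, Prod.fst_add, Prod.snd_add,
      lcast_fst, lcast_snd, map_add, map_smul, map_zero, add_zero, Prod.fst_sub, Prod.snd_sub,
      lcast_lcast, lcast_refl']
    simp only [← lcast_natural (fun m => TensorProduct.map (LinearMap.id : Y m →ₗ[k] Y m) (Ia a))]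
    simp only [lcast_lcast, lcast_refl']
    rw [DM_comm a dY (n-1) w]
    rw [show ((-1:k))^(n+1-1) = (-1)^n from by norm_num]
    rw [smul_smul, neg_one_zpow_mul_self, one_smul, MT_eq]
    rw [neg_one_zpow_sub_one]
    module
  · simp only [dPrev, hMap, dTOmega, uMap, evMap, LinearMap.comp_apply, LinearMap.prod_apply,
      Function.prod, LinearMap.fst_apply, LinearMap.snd_apply, LinearMap.add_apply,
      LinearMap.smul_apply, LinearMap.zero_apply, Prod.fst_add, Prod.snd_add,
      lcast_fst, lcast_snd, map_add, map_smul, map_zero, add_zero, Prod.fst_sub, Prod.snd_sub,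
      lcast_lcast, lcast_refl']
    rw [smul_smul, neg_one_zpow_mul_self, one_smul, TM_eq, sub_zero]

end Aux2

/-- Let `k` be a field of characteristic zero, `Ω` the polynomial de Rham
complex of the line and `Y` any cochain complex of `k`-vector spaces.  Then the unit map
`u : Y → Y ⊗ Ω`, `y ↦ y ⊗ 1`, is a chain map and a quasi-isomorphism, and for every
`a ∈ k` the evaluation map `id_Y ⊗ ev_a : Y ⊗ Ω → Y` is a chain map and a
quasi-isomorphism satisfying `(id_Y ⊗ ev_a) ∘ u = id_Y`. -/
theorem unit_and_evaluation_quasi_iso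
    [CharZero k]
    (dY : ∀ n, Y n →ₗ[k] Y (n+1))
    (hdY : ∀ n (y : Y n), dY (n+1) (dY n y) = 0) :
    (∀ n (y : Y n), dTOmega dY n (uMap n y) = uMap (n+1) (dY n y)) ∧
    InducesCohomologyIso dY (dTOmega dY) (fun n => uMap n) ∧
    (∀ a : k,
      (∀ n (w : TOmega k Y n), dY n (evMap a n w) = evMap a (n+1) (dTOmega dY n w)) ∧
      InducesCohomologyIso (dTOmega dY) dY (fun n => evMap a n) ∧
      (∀ n (y : Y n), evMap a n (uMap n y) = y)) := by
  have uiso : InducesCohomologyIso dY (dTOmega dY) (fun n => uMap n) := by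
    intro n
    constructor
    · -- injectivity of u on cohomology
      rintro x hdx ⟨z, hz⟩
      refine ⟨evMap 0 (n-1) z, ?_⟩
      have := congrArg (evMap (Y := Y) 0 n) hz
      rw [ev_u] at this
      rw [this]
      simp only [dPrev, LinearMap.comp_apply]
      rw [← lcast_natural (fun m => evMap (Y := Y) 0 m), ← ev_chain]
    · -- surjectivity of u on cohomology
      intro v hdv
      refine ⟨evMap 0 n v, ?_, hMap 0 n v, ?_⟩
      · rw [ev_chain 0 dY n v, hdv, map_zero]
      · have H := homotopy 0 dY n v
        rw [hdv, map_zero, map_zero, add_zero] at H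
        rw [← H]
  refine ⟨u_chain dY, uiso, fun a => ⟨ev_chain a dY, ?_, ev_u a⟩⟩
  intro n
  constructor
  · -- injectivity of ev on cohomology
    rintro v hdv ⟨z, hz⟩
    refine ⟨uMap (n-1) z + hMap a n v, ?_⟩
    have H := homotopy a dY n v
    rw [hdv, map_zero, map_zero, add_zero] at H
    have hu : uMap n (evMap a n v) = dPrev (dTOmega dY) n (uMap (n-1) z) := by
      rw [hz]
      simp only [dPrev, LinearMap.comp_apply]
      rw [← lcast_natural (fun m => uMap (Y := Y) m), ← u_chain]
    rw [map_add, ← hu, H]; abel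
  · -- surjectivity of ev on cohomology
    intro y hdy
    refine ⟨uMap n y, ?_, 0, ?_⟩
    · rw [u_chain dY n y, hdy, map_zero]
    · rw [ev_u, sub_self, map_zero]

end
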